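/- Let H be a self-adjoint operator on a Hilbert space, V a bounded symmetric operator, E a real number, and φ a vector with (H + V)φ = Eφ. If P is the spectral projection of H onto a Borel set S with dist(E, S) ≥ d > 0, then ‖Pφ‖ ≤ (‖V‖/d)·‖φ‖. -/

import Mathlib

/-- If `P` is a spectral projection of the self-adjoint operator `H`
onto a Borel set `S` with `dist(E, S) ≥ d > 0` (encoded via: `P` is an orthogonal
projection commuting with `H` such that `‖(H - E)ψ‖ ≥ d‖ψ‖` for all `ψ` in the
range of `P`, which is exactly the spectral-theorem content of the distance
condition), `V` is bounded symmetric, and `(H + V)φ = Eφ`, then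
`‖Pφ‖ ≤ (‖V‖/d)‖φ‖`. -/
theorem stmt_0
    {𝓗 : Type*} [NormedAddCommGroup 𝓗] [InnerProductSpace ℂ 𝓗] [CompleteSpace 𝓗]
    (H V P : 𝓗 →L[ℂ] 𝓗)
    (hH : IsSelfAdjoint H) (hV : IsSelfAdjoint V) (hP : IsSelfAdjoint P)
    (hPproj : P ∘L P = P) (hPH : H ∘L P = P ∘L H)
    (E : ℝ) (d : ℝ) (hd : 0 < d)
    (hdist : ∀ ψ : 𝓗, d * ‖P ψ‖ ≤ ‖H (P ψ) - (E : ℂ) • (P ψ)‖)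
    (φ : 𝓗) (hφ : H φ + V φ = (E : ℂ) • φ) :
    ‖P φ‖ ≤ (‖V‖ / d) * ‖φ‖ := by
  -- P is a contraction
  have hcontr : ∀ ψ : 𝓗, ‖P ψ‖ ≤ ‖ψ‖ := by
    intro ψ
    have h1 : (‖P ψ‖ : ℝ) ^ 2 = RCLike.re (inner ℂ (P ψ) (P ψ) : ℂ) := by
      rw [inner_self_eq_norm_sq (𝕜 := ℂ)]
    have hPP : P (P ψ) = P ψ := by
      have := congrArg (fun T => T ψ) hPproj
      simpa using this
    have h2 : (inner ℂ (P ψ) (P ψ) : ℂ) = inner ℂ (P ψ) ψ := by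
      calc (inner ℂ (P ψ) (P ψ) : ℂ) = inner ℂ (P (P ψ)) ψ := (hP.isSymmetric (P ψ) ψ).symm
        _ = inner ℂ (P ψ) ψ := by rw [hPP]
    have h3 : RCLike.re (inner ℂ (P ψ) ψ : ℂ) ≤ ‖ψ‖ * ‖P ψ‖ := by
      calc RCLike.re (inner ℂ (P ψ) ψ : ℂ) ≤ ‖(inner ℂ (P ψ) ψ : ℂ)‖ := RCLike.re_le_norm _
        _ ≤ ‖P ψ‖ * ‖ψ‖ := norm_inner_le_norm _ _
        _ = ‖ψ‖ * ‖P ψ‖ := mul_comm _ _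
    have h4 : ‖P ψ‖ ^ 2 ≤ ‖ψ‖ * ‖P ψ‖ := by rw [h1, h2]; exact h3
    rcases eq_or_lt_of_le (norm_nonneg (P ψ)) with h | h
    · rw [← h]; exact norm_nonneg ψ
    · nlinarith [h4]
  -- key identity: H(Pφ) - E•Pφ = -P(Vφ)
  have hkey : H (P φ) - (E : ℂ) • (P φ) = -(P (V φ)) := by
    have h1 : H (P φ) = P (H φ) := by
      have := congrArg (fun T => T φ) hPH
      simpa using this
    have h2 : H φ = (E : ℂ) • φ - V φ := by
      rw [← hφ]; abel
    rw [h1, h2, map_sub, map_smul]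
    abel
  have h5 : d * ‖P φ‖ ≤ ‖P (V φ)‖ := by
    have := hdist φ
    rwa [hkey, norm_neg] at this
  have h6 : ‖P (V φ)‖ ≤ ‖V‖ * ‖φ‖ := by
    calc ‖P (V φ)‖ ≤ ‖V φ‖ := hcontr _
      _ ≤ ‖V‖ * ‖φ‖ := V.le_opNorm φ
  rw [div_mul_eq_mul_div, le_div_iff₀ hd, mul_comm]
  linarith
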